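/- Let k be a field of characteristic different from 2 and let n ≥ 2. Let x, y, z be n×n matrices over k of determinant 1 (elements of SL_n(k)) such that: x is an involution (x² = 1 and x ≠ 1); y is a unipotent element with quadratic minimal polynomial ((y − 1)² = 0 and y ≠ 1); and z is a regular unipotent element ((z − 1)^n = 0 and (z − 1)^(n−1) ≠ 0, i.e. z acts on kⁿ with a single Jordan block of size n with eigenvalue 1). Then x · y · z ≠ 1. -/

import Mathlib

set_option maxHeartbeats 1000000 in
/-- Lemma (Guralnick–Malle, Lemma `sl`): in `SL_n(k)`, `char k ≠ 2`, an involution `x`,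
a quadratic unipotent `y` and a regular unipotent `z` never satisfy `x * y * z = 1`. -/
theorem stmt_0 (k : Type*) [Field k] (hchar : ringChar k ≠ 2)
    (n : ℕ) (hn : 2 ≤ n)
    (x y z : Matrix (Fin n) (Fin n) k)
    (hxdet : x.det = 1) (hydet : y.det = 1) (hzdet : z.det = 1)
    (hx2 : x ^ 2 = 1) (hx1 : x ≠ 1)
    (hy2 : (y - 1) ^ 2 = 0) (hy1 : y ≠ 1)
    (hzn : (z - 1) ^ n = 0) (hzreg : (z - 1) ^ (n - 1) ≠ 0) :
    x * y * z ≠ 1 := by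
  intro h
  have h2k : (2 : k) ≠ 0 := Ring.two_ne_zero hchar
  have two_eq : (2 : Matrix (Fin n) (Fin n) k) = 1 + 1 := (one_add_one_eq_two).symm
  have hx2' : x * x = 1 := by rw [← sq]; exact hx2
  have hy2' : y * y - 2 * y + 1 = 0 := by
    have e : (y - 1) ^ 2 = y * y - 2 * y + 1 := by noncomm_ring
    rw [e] at hy2; exact hy2
  -- y * z = x
  have hxyz : x * (y * z) = 1 := by rw [← mul_assoc]; exact h
  have hyz : y * z = x := by
    calc y * z = 1 * (y * z) := (one_mul _).symm
    _ = (x * x) * (y * z) := by rw [hx2']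
    _ = x * (x * (y * z)) := by rw [mul_assoc]
    _ = x := by rw [hxyz, mul_one]
  have hsq : (y * z) * (y * z) = 1 := by rw [hyz]; exact hx2'
  -- inverses of y
  have hyl : (2 - y) * y = 1 := by
    have e : (2 - y) * y - 1 = -(y * y - 2 * y + 1) := by noncomm_ring
    rw [hy2', neg_zero, sub_eq_zero] at e
    exact e
  -- z*y*z = 2 - y
  have hzyz : z * y * z = 2 - y := by
    have h1 : y * (z * y * z) = 1 := by
      calc y * (z * y * z) = (y * z) * (y * z) := by noncomm_ring
      _ = 1 := hsq
    calc z * y * z = 1 * (z * y * z) := (one_mul _).symm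
    _ = ((2 - y) * y) * (z * y * z) := by rw [hyl]
    _ = (2 - y) * (y * (z * y * z)) := by rw [mul_assoc]
    _ = 2 - y := by rw [h1, mul_one]
  -- main equation: L(y-1) = 1 - z²
  have hE : z * (y - 1) * z + (y - 1) = 1 - z * z := by
    have e : z * (y - 1) * z + (y - 1) = (z * y * z) - z * z + y - 1 := by noncomm_ring
    rw [e, hzyz, two_eq]
    abel
  -- injectivity of L : d ↦ d + z d z
  have key : ∀ d : Matrix (Fin n) (Fin n) k, d + z * d * z = 0 → d = 0 := by
    intro d hd
    have hd2 : d + d = -((z - 1) * d + d * (z - 1) + (z - 1) * d * (z - 1)) := by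
      have e : d + z * d * z
          = (d + d) + ((z - 1) * d + d * (z - 1) + (z - 1) * d * (z - 1)) := by
        noncomm_ring
      rw [hd] at e
      exact eq_neg_of_add_eq_zero_left e.symm
    have main : ∀ m a b : ℕ, 2 * n ≤ a + b + m → (z - 1) ^ a * d * (z - 1) ^ b = 0 := by
      intro m
      induction m with
      | zero =>
        intro a b hab
        rcases (by omega : n ≤ a ∨ n ≤ b) with h' | h'
        · rw [pow_eq_zero_of_le h' hzn, zero_mul, zero_mul]
        · rw [pow_eq_zero_of_le h' hzn, mul_zero]
      | succ m ih =>
        intro a b hab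
        have h1 := ih (a + 1) b (by omega)
        have h2 := ih a (b + 1) (by omega)
        have h3 := ih (a + 1) (b + 1) (by omega)
        rw [pow_succ] at h1 h3
        rw [pow_succ'] at h2
        rw [pow_succ'] at h3
        have e : (z - 1) ^ a * (d + d) * (z - 1) ^ b
            = ((z - 1) ^ a * d * (z - 1) ^ b + (z - 1) ^ a * d * (z - 1) ^ b) := by
          noncomm_ring
        have e2 : (z - 1) ^ a * (-((z - 1) * d + d * (z - 1) + (z - 1) * d * (z - 1))) * (z - 1) ^ b
            = -(((z - 1) ^ a * (z - 1)) * d * (z - 1) ^ b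
              + (z - 1) ^ a * d * ((z - 1) * (z - 1) ^ b)
              + ((z - 1) ^ a * (z - 1)) * d * ((z - 1) * (z - 1) ^ b)) := by
          noncomm_ring
        have e3 : (z - 1) ^ a * d * (z - 1) ^ b + (z - 1) ^ a * d * (z - 1) ^ b = 0 := by
          rw [← e, hd2, e2, h1, h2, h3]
          simp
        have e4 : (2 : k) • ((z - 1) ^ a * d * (z - 1) ^ b) = 0 := by
          rw [two_smul]; exact e3
        rcases smul_eq_zero.mp e4 with h' | h'
        · exact absurd h' h2k
        · exact h'
    have := main (2 * n) 0 0 (by omega)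
    simpa using this
  -- case split on n
  by_cases h3n : 3 ≤ n
  · -- n ≥ 3 : build inverse of A = 1 + z², show u = (1-z²)·A⁻¹, contradiction with u² = 0
    have hNnil : IsNilpotent (z - 1) := ⟨n, hzn⟩
    have hc1 : Commute (z - 1) (z + 1) := by
      show (z - 1) * (z + 1) = (z + 1) * (z - 1)
      noncomm_ring
    have h2u : IsUnit (2 : Matrix (Fin n) (Fin n) k) := by
      have hk : IsUnit (2 : k) := isUnit_iff_ne_zero.mpr h2k
      have := hk.map (algebraMap k (Matrix (Fin n) (Fin n) k))
      rwa [map_ofNat] at this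
    have hAunit : IsUnit (1 + z * z) := by
      have hnil : IsNilpotent (z * z - 1) := by
        have e : z * z - 1 = (z - 1) * (z + 1) := by noncomm_ring
        rw [e]
        exact hc1.isNilpotent_mul_right hNnil
      have hcomm : Commute (z * z - 1) (2 : Matrix (Fin n) (Fin n) k) :=
        Commute.ofNat_right _ 2
      have := hnil.isUnit_add_left_of_commute h2u hcomm
      have e : (2 : Matrix (Fin n) (Fin n) k) + (z * z - 1) = 1 + z * z := by
        rw [two_eq]; abel
      rwa [e] at this
    set c := Ring.inverse (1 + z * z) with hc
    have hca : (1 + z * z) * c = 1 := Ring.mul_inverse_cancel _ hAunit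
    have hac : c * (1 + z * z) = 1 := Ring.inverse_mul_cancel _ hAunit
    have hzc : z * c = c * z := by
      have h1 : z * (1 + z * z) = (1 + z * z) * z := by noncomm_ring
      have e1 : (1 + z * z) * (z * c) = z := by
        calc (1 + z * z) * (z * c) = ((1 + z * z) * z) * c := (mul_assoc _ _ _).symm
        _ = (z * (1 + z * z)) * c := by rw [h1]
        _ = z * ((1 + z * z) * c) := mul_assoc _ _ _
        _ = z := by rw [hca, mul_one]
      calc z * c = 1 * (z * c) := (one_mul _).symm
      _ = (c * (1 + z * z)) * (z * c) := by rw [hac]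
      _ = c * ((1 + z * z) * (z * c)) := mul_assoc _ _ _
      _ = c * z := by rw [e1]
    have hu' : ((1 - z * z) * c) + z * ((1 - z * z) * c) * z = 1 - z * z := by
      have h1 : z * (1 - z * z) = (1 - z * z) * z := by noncomm_ring
      have e : z * ((1 - z * z) * c) * z = (1 - z * z) * (c * (z * z)) := by
        calc z * ((1 - z * z) * c) * z = (z * (1 - z * z)) * (c * z) := by noncomm_ring
        _ = ((1 - z * z) * z) * (c * z) := by rw [h1]
        _ = (1 - z * z) * ((z * c) * z) := by noncomm_ring
        _ = (1 - z * z) * ((c * z) * z) := by rw [hzc]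
        _ = (1 - z * z) * (c * (z * z)) := by rw [mul_assoc]
      rw [e]
      calc (1 - z * z) * c + (1 - z * z) * (c * (z * z))
          = (1 - z * z) * (c * (1 + z * z)) := by noncomm_ring
      _ = 1 - z * z := by rw [hac, mul_one]
    have hu : y - 1 = (1 - z * z) * c := by
      have e : ((y - 1) - (1 - z * z) * c) + z * ((y - 1) - (1 - z * z) * c) * z
          = (z * (y - 1) * z + (y - 1)) - (((1 - z * z) * c) + z * ((1 - z * z) * c) * z) := by
        noncomm_ring
      rw [hE, hu', sub_self] at e
      have := key _ e
      exact sub_eq_zero.mp this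
    -- now (1-z²)² = 0
    have hcc : c * (1 - z * z) = (1 - z * z) * c := by
      have e1 : c * (1 - z * z) = c + c - 1 := by
        have : c * (1 - z * z) = c * 2 - c * (1 + z * z) := by noncomm_ring
        rw [this, hac]; noncomm_ring
      have e2 : (1 - z * z) * c = c + c - 1 := by
        have : (1 - z * z) * c = 2 * c - (1 + z * z) * c := by noncomm_ring
        rw [this, hca]; noncomm_ring
      rw [e1, e2]
    have hu2 : (y - 1) * (y - 1) = 0 := by rw [← sq]; exact hy2
    have hPP : (1 - z * z) * (1 - z * z) = 0 := by
      have e : (1 - z * z) * (1 - z * z)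
          = (((1 - z * z) * c) * ((1 - z * z) * c)) * ((1 + z * z) * (1 + z * z)) := by
        calc (1 - z * z) * (1 - z * z)
            = ((1 - z * z) * 1) * ((1 - z * z) * 1) := by rw [mul_one]
        _ = ((1 - z * z) * (c * (1 + z * z))) * ((1 - z * z) * (c * (1 + z * z))) := by rw [hac]
        _ = (1 - z * z) * c * ((1 + z * z) * ((1 - z * z) * (c * (1 + z * z)))) := by
            simp [mul_assoc]
        _ = (1 - z * z) * c * (((1 + z * z) * (1 - z * z)) * (c * (1 + z * z))) := by
            rw [← mul_assoc (1 + z * z)]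
        _ = (1 - z * z) * c * (((1 - z * z) * (1 + z * z)) * (c * (1 + z * z))) := by
            rw [show (1 + z * z) * (1 - z * z) = (1 - z * z) * (1 + z * z) by noncomm_ring]
        _ = (1 - z * z) * c * ((1 - z * z) * ((1 + z * z) * c) * (1 + z * z)) := by
            simp [mul_assoc]
        _ = (1 - z * z) * c * ((1 - z * z) * (c * (1 + z * z)) * (1 + z * z)) := by
            rw [hca, hac]
        _ = (((1 - z * z) * c) * ((1 - z * z) * c)) * ((1 + z * z) * (1 + z * z)) := by
            simp [mul_assoc]
      rw [e, ← hu, hu2, zero_mul]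
    have hBunit : IsUnit ((1 + z) * (1 + z)) := by
      have h1 : IsUnit (1 + z) := by
        have hnil : IsNilpotent (z - 1) := hNnil
        have hcomm : Commute (z - 1) (2 : Matrix (Fin n) (Fin n) k) :=
          Commute.ofNat_right _ 2
        have := hnil.isUnit_add_left_of_commute h2u hcomm
        have e : (2 : Matrix (Fin n) (Fin n) k) + (z - 1) = 1 + z := by
          rw [two_eq]; abel
        rwa [e] at this
      exact h1.mul h1
    have hzz0 : (z - 1) * (z - 1) = 0 := by
      have e : ((z - 1) * (z - 1)) * ((1 + z) * (1 + z)) = (1 - z * z) * (1 - z * z) := by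
        noncomm_ring
      rw [hPP] at e
      exact (hBunit.mul_left_eq_zero).mp e
    have : (z - 1) ^ (n - 1) = ((z - 1) * (z - 1)) * (z - 1) ^ (n - 3) := by
      rw [← sq, ← pow_add]
      congr 1
      omega
    rw [hzz0, zero_mul] at this
    exact hzreg this
  · -- n = 2
    have hn2 : n = 2 := by omega
    subst hn2
    have hz2' : (z - 1) * (z - 1) = 0 := by rw [← sq]; exact hzn
    have e5 : ((z - 1) + z * (z - 1) * z) + (1 - z * z) = z * ((z - 1) * (z - 1)) := by
      noncomm_ring
    rw [hz2', mul_zero] at e5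
    have e6 : (z - 1) + z * (z - 1) * z = -(1 - z * z) := eq_neg_of_add_eq_zero_left e5
    have e7 : ((y - 1) + (z - 1)) + z * ((y - 1) + (z - 1)) * z
        = (z * (y - 1) * z + (y - 1)) + ((z - 1) + z * (z - 1) * z) := by noncomm_ring
    rw [hE, e6, add_neg_cancel] at e7
    have hd0 := key _ e7
    have hyval : y = 2 - z := by
      have h9 : y - 1 = -(z - 1) := eq_neg_of_add_eq_zero_left hd0
      have h10 : y = -(z - 1) + 1 := sub_eq_iff_eq_add.mp h9
      rw [h10, two_eq]
      abel
    have hyz1 : y * z = 1 := by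
      have e : (2 - z) * z - 1 = -((z - 1) * (z - 1)) := by
        rw [two_eq]; noncomm_ring
      rw [hz2', neg_zero, sub_eq_zero] at e
      rw [hyval, e]
    rw [hyz1] at hyz
    exact hx1 hyz.symm
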